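/- Let k be a positive integer and let α, γ, Q > 0 be numbers such that 1 ≤ Q ≤ α/(16γ). Suppose H is a (γk,γ)-nowhere-dense graph and U ⊆ V(H) satisfies |U| ≤ Qk. Then |shadow_H(U, αk)| ≤ (16Q²γ/α)·k, where shadow_H(U, αk) := {v ∈ V(H) : v has more than αk neighbours in U}. -/

import Mathlib

/-- An `(m,γ)`-dense spot in a graph `G`: a non-empty bipartite subgraph `(A,B;F)` of `G`
with density greater than `γ` and minimum degree greater than `m`. -/
structure DenseSpot (V : Type) [Fintype V] (G : SimpleGraph V) (m γ : ℝ) where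
  A : Finset V
  B : Finset V
  F : SimpleGraph V
  disj : Disjoint A B
  le : F ≤ G
  bipartite : ∀ ⦃a b : V⦄, F.Adj a b → (a ∈ A ∧ b ∈ B) ∨ (a ∈ B ∧ b ∈ A)
  nonempty : ∃ a b, F.Adj a b
  dense : γ * ((A.card : ℝ) * (B.card : ℝ)) < (F.edgeSet.ncard : ℝ)
  mindeg : ∀ v : V, v ∈ A ∨ v ∈ B → m < ((F.neighborSet v).ncard : ℝ)

/-- A graph is `(m,γ)`-nowhere-dense if it contains no `(m,γ)`-dense spot. -/
def NowhereDense (V : Type) [Fintype V] (G : SimpleGraph V) (m γ : ℝ) : Prop :=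
  IsEmpty (DenseSpot V G m γ)

open Finset
set_option linter.unusedSectionVars false
set_option linter.unusedVariables false

section AuxS
variable {V : Type} [Fintype V] [DecidableEq V] (H : SimpleGraph V) [DecidableRel H.Adj]

/-- Number of adjacent pairs `(a,b)` with `a ∈ A`, `b ∈ B`. -/
def eAB (A B : Finset V) : ℕ := ∑ a ∈ A, (B.filter (H.Adj a)).card

lemma eAB_comm (A B : Finset V) : eAB H A B = eAB H B A := by
  unfold eAB
  simp only [Finset.card_filter]
  refine Finset.sum_comm.trans (Finset.sum_congr rfl fun b _ => Finset.sum_congr rfl fun a _ => ?_)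
  by_cases h : H.Adj a b
  · simp [h, h.symm]
  · have h2 : ¬ H.Adj b a := fun h' => h h'.symm
    simp [h, h2]

lemma eAB_union_right (A B C : Finset V) (h : Disjoint B C) :
    eAB H A (B ∪ C) = eAB H A B + eAB H A C := by
  unfold eAB
  rw [← Finset.sum_add_distrib]
  refine Finset.sum_congr rfl fun a _ => ?_
  rw [Finset.filter_union, Finset.card_union_of_disjoint (Finset.disjoint_filter_filter h)]

lemma eAB_insert_left (a : V) (A B : Finset V) (ha : a ∉ A) :
    eAB H (insert a A) B = eAB H A B + (B.filter (H.Adj a)).card := by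
  unfold eAB
  rw [Finset.sum_insert ha, add_comm]

lemma eAB_insert_right (a : V) (A B : Finset V) (ha : a ∉ B) :
    eAB H A (insert a B) = eAB H A B + (A.filter (H.Adj a)).card := by
  rw [eAB_comm, eAB_insert_left H a B A ha, eAB_comm]

lemma eAB_erase_left (a : V) (A B : Finset V) (ha : a ∈ A) :
    eAB H (A.erase a) B + (B.filter (H.Adj a)).card = eAB H A B :=
  Finset.sum_erase_add _ _ ha

end AuxS

section AuxS2
variable {V : Type} [Fintype V] [DecidableEq V] (H : SimpleGraph V) [DecidableRel H.Adj]

/-- Iteratively deleting low-degree vertices from a bipartite pair with many edges yields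
a pair in which every vertex has degree bigger than `t`. -/
lemma exists_good (t : ℝ) (ht : 0 ≤ t) :
    ∀ n (A B : Finset V), A.card + B.card ≤ n →
      t * ((A.card : ℝ) + (B.card : ℝ)) < (eAB H A B : ℝ) →
      ∃ A' B', A' ⊆ A ∧ B' ⊆ B ∧ (∃ a ∈ A', ∃ b ∈ B', H.Adj a b) ∧
        (∀ a ∈ A', t < ((B'.filter (H.Adj a)).card : ℝ)) ∧
        (∀ b ∈ B', t < ((A'.filter (H.Adj b)).card : ℝ)) := by
  intro n
  induction n with
  | zero =>
    intro A B hn he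
    have hA0 : A = ∅ := Finset.card_eq_zero.mp (by omega)
    rw [hA0] at he
    simp [eAB] at he
    nlinarith [he]
  | succ n ih =>
    intro A B hn he
    by_cases hA : ∀ a ∈ A, t < ((B.filter (H.Adj a)).card : ℝ)
    · by_cases hB : ∀ b ∈ B, t < ((A.filter (H.Adj b)).card : ℝ)
      · refine ⟨A, B, subset_rfl, subset_rfl, ?_, hA, hB⟩
        have hpos : 0 < eAB H A B := by
          have h0 : (0:ℝ) ≤ t * ((A.card : ℝ) + (B.card : ℝ)) := by positivity
          exact_mod_cast h0.trans_lt he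
        have hne : eAB H A B ≠ 0 := hpos.ne'
        unfold eAB at hne
        obtain ⟨a, ha, hfa⟩ := Finset.exists_ne_zero_of_sum_ne_zero hne
        obtain ⟨b, hb⟩ := Finset.card_ne_zero.mp hfa |>.exists_mem
        rw [Finset.mem_filter] at hb
        exact ⟨a, ha, b, hb.1, hb.2⟩
      · push_neg at hB
        obtain ⟨b₀, hb₀, hdeg⟩ := hB
        have hB1 : 1 ≤ B.card := Finset.card_pos.mpr ⟨b₀, hb₀⟩
        have hcard : (B.erase b₀).card + A.card ≤ n := by
          rw [Finset.card_erase_of_mem hb₀]; omega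
        have hkey : eAB H (B.erase b₀) A + (A.filter (H.Adj b₀)).card = eAB H B A :=
          eAB_erase_left H b₀ B A hb₀
        have hcomm : eAB H B A = eAB H A B := eAB_comm H B A
        have hcerase : ((B.erase b₀).card : ℝ) = (B.card : ℝ) - 1 := by
          rw [Finset.card_erase_of_mem hb₀]; push_cast [hB1]; ring
        have he' : t * (((B.erase b₀).card : ℝ) + (A.card : ℝ)) < (eAB H (B.erase b₀) A : ℝ) := by
          have hk' : (eAB H (B.erase b₀) A : ℝ) + ((A.filter (H.Adj b₀)).card : ℝ)
              = (eAB H A B : ℝ) := by rw [← hcomm]; exact_mod_cast congrArg (Nat.cast : ℕ → ℝ) hkey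
          rw [hcerase]
          nlinarith [he, hdeg, hk']
        obtain ⟨B', A', hB', hA', ⟨b, hb, a, ha, hadj⟩, h1, h2⟩ := ih (B.erase b₀) A hcard he'
        exact ⟨A', B', hA', hB'.trans (Finset.erase_subset _ _), ⟨a, ha, b, hb, hadj.symm⟩, h2, h1⟩
    · push_neg at hA
      obtain ⟨a₀, ha₀, hdeg⟩ := hA
      have hA1 : 1 ≤ A.card := Finset.card_pos.mpr ⟨a₀, ha₀⟩
      have hcard : (A.erase a₀).card + B.card ≤ n := by
        rw [Finset.card_erase_of_mem ha₀]; omega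
      have hkey : eAB H (A.erase a₀) B + (B.filter (H.Adj a₀)).card = eAB H A B :=
        eAB_erase_left H a₀ A B ha₀
      have hcerase : ((A.erase a₀).card : ℝ) = (A.card : ℝ) - 1 := by
        rw [Finset.card_erase_of_mem ha₀]; push_cast [hA1]; ring
      have he' : t * (((A.erase a₀).card : ℝ) + (B.card : ℝ)) < (eAB H (A.erase a₀) B : ℝ) := by
        have hk' : (eAB H (A.erase a₀) B : ℝ) + ((B.filter (H.Adj a₀)).card : ℝ)
            = (eAB H A B : ℝ) := by exact_mod_cast congrArg (Nat.cast : ℕ → ℝ) hkey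
        rw [hcerase]
        nlinarith [he, hdeg, hk']
      obtain ⟨A', B', hA', hB', hedge, h1, h2⟩ := ih (A.erase a₀) B hcard he'
      exact ⟨A', B', hA'.trans (Finset.erase_subset _ _), hB', hedge, h1, h2⟩

/-- Max-cut: every set `T` has a bipartition capturing at least half of its internal edges. -/
lemma maxcut (T : Finset V) : ∃ T₁, T₁ ⊆ T ∧ eAB H T T ≤ 4 * eAB H T₁ (T \ T₁) := by
  induction T using Finset.induction_on with
  | empty => exact ⟨∅, subset_rfl, by simp [eAB]⟩
  | @insert a T haT ih =>
    obtain ⟨T₁, hsub, hcut⟩ := ih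
    have haT₁ : a ∉ T₁ := fun h => haT (hsub h)
    have hTsplit : T = T₁ ∪ (T \ T₁) := (Finset.union_sdiff_of_subset hsub).symm
    have hd : (T.filter (H.Adj a)).card
        = (T₁.filter (H.Adj a)).card + ((T \ T₁).filter (H.Adj a)).card := by
      conv_lhs => rw [hTsplit]
      rw [Finset.filter_union,
        Finset.card_union_of_disjoint (Finset.disjoint_filter_filter Finset.disjoint_sdiff)]
    have hfa : (insert a T).filter (H.Adj a) = T.filter (H.Adj a) := by
      rw [Finset.filter_insert, if_neg (H.irrefl)]
    have hnew : eAB H (insert a T) (insert a T)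
        = eAB H T T + 2 * (T.filter (H.Adj a)).card := by
      rw [eAB_insert_left H a T (insert a T) haT, eAB_insert_right H a T T haT, hfa]
      ring
    rcases Nat.le_total ((T₁.filter (H.Adj a)).card) (((T \ T₁).filter (H.Adj a)).card)
      with hle | hle
    · -- put a on side T₁
      refine ⟨insert a T₁, Finset.insert_subset_insert a hsub, ?_⟩
      have hset : (insert a T) \ (insert a T₁) = T \ T₁ := by
        ext x
        simp only [Finset.mem_sdiff, Finset.mem_insert, not_or]
        constructor
        · rintro ⟨h1 | h1, h2, h3⟩
          · exact absurd h1 h2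
          · exact ⟨h1, h3⟩
        · rintro ⟨h1, h2⟩
          exact ⟨Or.inr h1, fun hx => haT (hx ▸ h1), h2⟩
      rw [hset, eAB_insert_left H a T₁ (T \ T₁) haT₁, hnew]
      omega
    · -- keep a on the other side
      refine ⟨T₁, hsub.trans (Finset.subset_insert a T), ?_⟩
      have hset : (insert a T) \ T₁ = insert a (T \ T₁) := by
        ext x
        simp only [Finset.mem_sdiff, Finset.mem_insert]
        constructor
        · rintro ⟨h1 | h1, h2⟩
          · exact Or.inl h1
          · exact Or.inr ⟨h1, h2⟩
        · rintro (h1 | ⟨h1, h2⟩)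
          · exact ⟨Or.inl h1, h1 ▸ haT₁⟩
          · exact ⟨Or.inr h1, h2⟩
      have haT2 : a ∉ T \ T₁ := fun h => haT (Finset.mem_sdiff.mp h).1
      rw [hset, eAB_insert_right H a T₁ (T \ T₁) haT2, hnew]
      omega

end AuxS2

section AuxS3
variable {V : Type} [Fintype V] [DecidableEq V] (H : SimpleGraph V) [DecidableRel H.Adj]

/-- From a bipartite pair in which every vertex has degree `> t`, with `t` large enough,
build a dense spot. -/
noncomputable def build_spot (γ m t : ℝ) (hγ : 0 < γ) (A B : Finset V) (hd : Disjoint A B)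
    (hedge : ∃ a ∈ A, ∃ b ∈ B, H.Adj a b)
    (hm : m < t) (hdens : γ * (B.card : ℝ) ≤ t)
    (hA : ∀ a ∈ A, t < ((B.filter (H.Adj a)).card : ℝ))
    (hB : ∀ b ∈ B, t < ((A.filter (H.Adj b)).card : ℝ)) :
    DenseSpot V H m γ := by
  classical
  set F : SimpleGraph V :=
    { Adj := fun x y => H.Adj x y ∧ ((x ∈ A ∧ y ∈ B) ∨ (x ∈ B ∧ y ∈ A))
      symm := by
        constructor
        rintro x y ⟨h1, h2 | h2⟩
        · exact ⟨h1.symm, Or.inr ⟨h2.2, h2.1⟩⟩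
        · exact ⟨h1.symm, Or.inl ⟨h2.2, h2.1⟩⟩
      loopless := ⟨fun x h => H.irrefl h.1⟩ } with hF
  letI : DecidableRel F.Adj := Classical.decRel _
  have hAB : ∀ x ∈ A, x ∉ B := fun x hx => Finset.disjoint_left.mp hd hx
  have hNFA : ∀ x ∈ A, F.neighborFinset x = B.filter (H.Adj x) := by
    intro x hx
    ext y
    simp only [SimpleGraph.mem_neighborFinset, Finset.mem_filter, hF]
    constructor
    · rintro ⟨h1, ⟨_, hy⟩ | ⟨hx', _⟩⟩
      · exact ⟨hy, h1⟩
      · exact absurd hx' (hAB x hx)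
    · rintro ⟨hy, h1⟩
      exact ⟨h1, Or.inl ⟨hx, hy⟩⟩
  have hNFB : ∀ x ∈ B, F.neighborFinset x = A.filter (H.Adj x) := by
    intro x hx
    ext y
    simp only [SimpleGraph.mem_neighborFinset, Finset.mem_filter, hF]
    constructor
    · rintro ⟨h1, ⟨hx', _⟩ | ⟨_, hy⟩⟩
      · exact absurd hx (hAB x hx')
      · exact ⟨hy, h1⟩
    · rintro ⟨hy, h1⟩
      exact ⟨h1, Or.inr ⟨hx, hy⟩⟩
  have hNF0 : ∀ x, x ∉ A ∪ B → F.neighborFinset x = ∅ := by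
    intro x hx
    rw [Finset.mem_union, not_or] at hx
    ext y
    simp only [SimpleGraph.mem_neighborFinset, Finset.notMem_empty, iff_false, hF]
    rintro ⟨_, ⟨hx', _⟩ | ⟨hx', _⟩⟩
    · exact hx.1 hx'
    · exact hx.2 hx'
  have hsum : ∑ v, F.degree v = 2 * eAB H A B := by
    rw [← Finset.sum_subset (Finset.subset_univ (A ∪ B))
      (fun x _ hx => by rw [SimpleGraph.degree, hNF0 x hx, Finset.card_empty]),
      Finset.sum_union hd]
    have h1 : ∑ v ∈ A, F.degree v = eAB H A B :=
      Finset.sum_congr rfl fun v hv => by rw [SimpleGraph.degree, hNFA v hv]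
    have h2 : ∑ v ∈ B, F.degree v = eAB H B A :=
      Finset.sum_congr rfl fun v hv => by rw [SimpleGraph.degree, hNFB v hv]
    rw [h1, h2, eAB_comm H B A]
    ring
  have hedgecount : F.edgeFinset.card = eAB H A B := by
    have h2 := SimpleGraph.sum_degrees_eq_twice_card_edges F
    omega
  have hAne : A.Nonempty := by obtain ⟨a, ha, _⟩ := hedge; exact ⟨a, ha⟩
  have hcount : γ * ((A.card : ℝ) * (B.card : ℝ)) < (eAB H A B : ℝ) := by
    have hsum2 : (A.card : ℝ) * t < (eAB H A B : ℝ) := by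
      have := Finset.sum_lt_sum_of_nonempty hAne (fun a ha => hA a ha)
      rw [Finset.sum_const, nsmul_eq_mul] at this
      calc (A.card : ℝ) * t < ∑ a ∈ A, ((B.filter (H.Adj a)).card : ℝ) := this
        _ = (eAB H A B : ℝ) := by rw [eAB]; push_cast; ring
    nlinarith [hAne.card_pos, (by exact_mod_cast hAne.card_pos : (0:ℝ) < A.card)]
  refine ⟨A, B, F, hd, fun x y h => h.1, fun a b h => h.2, ?_, ?_, ?_⟩
  · obtain ⟨a, ha, b, hb, h⟩ := hedge
    exact ⟨a, b, h, Or.inl ⟨ha, hb⟩⟩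
  · rw [Set.ncard_eq_toFinset_card' F.edgeSet]
    have : F.edgeSet.toFinset = F.edgeFinset := rfl
    rw [this, hedgecount]
    exact hcount
  · intro v hv
    rw [Set.ncard_eq_toFinset_card' (F.neighborSet v)]
    have hfin : (F.neighborSet v).toFinset = F.neighborFinset v := rfl
    rw [hfin]
    rcases hv with hv | hv
    · rw [hNFA v hv]; exact hm.trans (hA v hv)
    · rw [hNFB v hv]; exact hm.trans (hB v hv)

end AuxS3

set_option maxHeartbeats 2000000 in
/-- If `1 ≤ Q ≤ α/(16γ)`, `H` is `(γk,γ)`-nowhere-dense and `|U| ≤ Qk`,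
then `|shadow_H(U, αk)| ≤ (16Q²γ/α)·k`, where the shadow consists of the vertices with more
than `αk` neighbours in `U`. -/
theorem stmt19 (V : Type) [Fintype V] (H : SimpleGraph V)
    (k : ℕ) (hk : 0 < k) (α γ Q : ℝ) (hα : 0 < α) (hγ : 0 < γ)
    (hQ1 : 1 ≤ Q) (hQ2 : Q ≤ α / (16 * γ))
    (hnd : NowhereDense V H (γ * k) γ)
    (U : Set V) (hU : (U.ncard : ℝ) ≤ Q * k) :
    (({v : V | α * k < ((H.neighborSet v ∩ U).ncard : ℝ)}).ncard : ℝ) ≤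
      16 * Q ^ 2 * γ / α * k := by
  letI : DecidableEq V := Classical.decEq V
  letI : DecidableRel H.Adj := Classical.decRel _
  by_contra hcon
  push_neg at hcon
  -- basic numeric facts
  have hk1 : (1:ℝ) ≤ (k:ℝ) := by exact_mod_cast hk
  have hkpos : (0:ℝ) < (k:ℝ) := by linarith
  have hQ0 : (0:ℝ) < Q := by linarith
  have hγα : 16 * γ * Q ≤ α := by
    have h16γ : (0:ℝ) < 16 * γ := by linarith
    have := (le_div_iff₀ h16γ).mp hQ2
    linarith
  have hQk1 : (1:ℝ) ≤ Q * k := by nlinarith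
  have hγk : (0:ℝ) < γ * k := mul_pos hγ hkpos
  have hQγk : (0:ℝ) ≤ Q * γ * k := by positivity
  have hQ1γk : (0:ℝ) ≤ (Q - 1) * (γ * k) := mul_nonneg (by linarith) hγk.le
  have ht0 : (0:ℝ) ≤ 2 * Q * γ * k := by positivity
  have ht0' : (0:ℝ) ≤ 9/8 * (Q * γ * k) := by positivity
  -- finset versions of U and the shadow S
  set S : Set V := {v : V | α * k < ((H.neighborSet v ∩ U).ncard : ℝ)} with hSdef
  set Uf : Finset V := (Set.toFinite U).toFinset with hUf
  set Sf : Finset V := (Set.toFinite S).toFinset with hSf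
  have hUcard : ((Uf.card : ℝ)) ≤ Q * k := by
    rwa [Set.ncard_eq_toFinset_card U (Set.toFinite U)] at hU
  have hScard : 16 * Q ^ 2 * γ / α * k < (Sf.card : ℝ) := by
    rwa [Set.ncard_eq_toFinset_card S (Set.toFinite S)] at hcon
  have hmem : ∀ v ∈ Sf, α * k < ((Uf.filter (H.Adj v)).card : ℝ) := by
    intro v hv
    rw [hSf, Set.Finite.mem_toFinset] at hv
    have hset : H.neighborSet v ∩ U = ↑(Uf.filter (H.Adj v)) := by
      ext x
      simp only [Set.mem_inter_iff, SimpleGraph.mem_neighborSet, Finset.coe_filter,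
        Set.mem_setOf_eq, hUf, Set.Finite.mem_toFinset]
      tauto
    have := hv
    rw [hSdef, Set.mem_setOf_eq, hset, Set.ncard_coe_finset] at this
    exact this
  have hsplit : (Sf \ Uf).card + (Sf ∩ Uf).card = Sf.card :=
    Finset.card_sdiff_add_card_inter Sf Uf
  by_cases hc1 : 6 * Q ^ 2 * γ / α * k < (((Sf \ Uf).card : ℝ))
  · -- Case 1 : many shadow vertices outside U
    set x : ℝ := 6 * Q ^ 2 * γ / α * k with hx
    have hxpos : 0 ≤ x := by positivity
    have hm_le : Nat.floor x + 1 ≤ (Sf \ Uf).card := by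
      have h1 : (Nat.floor x : ℝ) ≤ x := Nat.floor_le hxpos
      have : ((Nat.floor x : ℕ) : ℝ) < ((Sf \ Uf).card : ℝ) := by linarith
      exact_mod_cast this
    obtain ⟨A, hAsub, hAcard⟩ := Finset.exists_subset_card_eq hm_le
    have hAlb : x < (A.card : ℝ) := by
      rw [hAcard]; push_cast; exact Nat.lt_floor_add_one x
    have hAne : A.Nonempty := Finset.card_pos.mp (by omega)
    have hAub : (A.card : ℝ) ≤ x + 1 := by
      rw [hAcard]; push_cast
      have := Nat.floor_le hxpos
      linarith
    have hdisj : Disjoint A Uf := Finset.disjoint_of_subset_left hAsub Finset.sdiff_disjoint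
    -- edge count lower bound
    have hsumlb : (A.card : ℝ) * (α * k) < (eAB H A Uf : ℝ) := by
      have := Finset.sum_lt_sum_of_nonempty hAne
        (fun a ha => hmem a (Finset.mem_sdiff.mp (hAsub ha)).1)
      rw [Finset.sum_const, nsmul_eq_mul] at this
      calc (A.card : ℝ) * (α * k) < ∑ a ∈ A, ((Uf.filter (H.Adj a)).card : ℝ) := this
        _ = (eAB H A Uf : ℝ) := by rw [eAB]; push_cast; ring
    have hAubQ : (A.card : ℝ) ≤ 3/8 * (Q*k) + 1 := by
      have hxle : x ≤ 3/8 * (Q*k) := by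
        rw [hx, div_mul_eq_mul_div, div_le_iff₀ hα]
        have h38 : (0:ℝ) ≤ 3/8*(Q*k) :=
          mul_nonneg (by norm_num) (mul_nonneg hQ0.le hkpos.le)
        have := mul_le_mul_of_nonneg_left hγα h38
        nlinarith [this]
      linarith
    have he : (2*Q*γ*k) * ((A.card : ℝ) + (Uf.card : ℝ)) < (eAB H A Uf : ℝ) := by
      have h6 : 6 * Q^2 * γ * k ≤ (A.card:ℝ) * α := by
        have hAlbx : 6 * Q^2 * γ * k / α < (A.card:ℝ) := by
          rw [hx, div_mul_eq_mul_div] at hAlb; exact hAlb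
        rw [div_lt_iff₀ hα] at hAlbx; linarith
      have hsumUb : (A.card:ℝ) + (Uf.card:ℝ) ≤ 19/8 * (Q*k) := by linarith
      have h3 := mul_le_mul_of_nonneg_left hsumUb ht0
      have h5 : 6*Q^2*γ*k*(k:ℝ) ≤ (A.card:ℝ)*α*k := mul_le_mul_of_nonneg_right h6 hkpos.le
      have hX : (0:ℝ) ≤ Q^2*γ*k*k := by positivity
      linarith [h3, h5, hX, hsumlb]
    obtain ⟨A', B', hA', hB', hedge, h1, h2⟩ := exists_good H (2*Q*γ*k) ht0
      (A.card + Uf.card) A Uf le_rfl he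
    have hB'card : ((B'.card : ℝ)) ≤ Q * k :=
      le_trans (by exact_mod_cast Finset.card_le_card hB') hUcard
    have hm1 : γ * (k:ℝ) < 2*Q*γ*k := by linarith [hγk, hQ1γk]
    have hd1 : γ * ((B'.card:ℝ)) ≤ 2*Q*γ*k := by
      have := mul_le_mul_of_nonneg_left hB'card hγ.le
      linarith [hQγk, this]
    exact hnd.false (build_spot H γ (γ * k) (2*Q*γ*k) hγ A' B'
      (hdisj.mono hA' hB') hedge hm1 hd1 h1 h2)
  · -- Case 2 : many shadow vertices inside U
    push_neg at hc1
    set T : Finset V := Sf ∩ Uf with hT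
    have hTsub : T ⊆ Uf := Finset.inter_subset_right
    have hTcardlb : 10 * Q ^ 2 * γ / α * k < (T.card : ℝ) := by
      have hcast : ((Sf \ Uf).card : ℝ) + ((Sf ∩ Uf).card : ℝ) = (Sf.card : ℝ) := by
        exact_mod_cast congrArg (Nat.cast : ℕ → ℝ) hsplit
      rw [hT]
      have e1 : 16 * Q ^ 2 * γ / α * (k:ℝ) = 16 * (Q ^ 2 * γ / α * k) := by ring
      have e2 : 6 * Q ^ 2 * γ / α * (k:ℝ) = 6 * (Q ^ 2 * γ / α * k) := by ring
      have e3 : 10 * Q ^ 2 * γ / α * (k:ℝ) = 10 * (Q ^ 2 * γ / α * k) := by ring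
      rw [e1] at hScard; rw [e2] at hc1; rw [e3]
      linarith [hScard, hc1, hcast]
    have hTpos : (0:ℝ) < (T.card : ℝ) := lt_of_le_of_lt (by positivity) hTcardlb
    have hTne : T.Nonempty := Finset.card_pos.mp (by exact_mod_cast hTpos)
    have hTub : ((T.card : ℝ)) ≤ Q * k := le_trans
      (by exact_mod_cast Finset.card_le_card hTsub) hUcard
    have hsumlb : (T.card : ℝ) * (α * k) < (eAB H T Uf : ℝ) := by
      have := Finset.sum_lt_sum_of_nonempty hTne
        (fun a ha => hmem a (Finset.mem_inter.mp ha).1)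
      rw [Finset.sum_const, nsmul_eq_mul] at this
      calc (T.card : ℝ) * (α * k) < ∑ a ∈ T, ((Uf.filter (H.Adj a)).card : ℝ) := this
        _ = (eAB H T Uf : ℝ) := by rw [eAB]; push_cast; ring
    have hUsplit : eAB H T Uf = eAB H T (Uf \ T) + eAB H T T := by
      rw [← eAB_union_right H T (Uf \ T) T Finset.sdiff_disjoint,
        Finset.sdiff_union_of_subset hTsub]
    -- key quantity bound : 10 Q^2 γ k^2 < T.card * α * k
    have hkey : 10 * Q^2 * γ * k * (k:ℝ) < (T.card : ℝ) * (α * k) := by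
      have h1 : 10 * Q^2 * γ * k / α < (T.card : ℝ) := by
        have heq : 10*Q^2*γ*(k:ℝ)/α = 10*Q^2*γ/α*k := by ring
        rw [heq]; exact hTcardlb
      rw [div_lt_iff₀ hα] at h1
      have := mul_lt_mul_of_pos_right h1 hkpos
      linarith [this]
    by_cases hc2 : (T.card : ℝ) * (α * k) / 2 < (eAB H T (Uf \ T) : ℝ)
    · -- Subcase 2a : many edges leaving T inside U
      have hcards : T.card + (Uf \ T).card = Uf.card := by
        have := Finset.card_sdiff_add_card_eq_card hTsub
        omega
      have he : (2*Q*γ*k) * ((T.card : ℝ) + ((Uf \ T).card : ℝ)) < (eAB H T (Uf \ T) : ℝ) := by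
        have hcR : ((T.card : ℝ)) + ((Uf \ T).card : ℝ) = (Uf.card : ℝ) := by
          exact_mod_cast congrArg (Nat.cast : ℕ → ℝ) hcards
        rw [hcR]
        have h3 := mul_le_mul_of_nonneg_left hUcard ht0
        have hX : (0:ℝ) ≤ Q^2*γ*k*k := by positivity
        linarith [h3, hX, hc2, hkey]
      obtain ⟨A', B', hA', hB', hedge, h1, h2⟩ := exists_good H (2*Q*γ*k) ht0
        (T.card + (Uf \ T).card) T (Uf \ T) le_rfl he
      have hB'card : ((B'.card : ℝ)) ≤ Q * k :=
        le_trans (by exact_mod_cast Finset.card_le_card (hB'.trans (Finset.sdiff_subset)))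
          hUcard
      have hm1 : γ * (k:ℝ) < 2*Q*γ*k := by linarith [hγk, hQ1γk]
      have hd1 : γ * ((B'.card:ℝ)) ≤ 2*Q*γ*k := by
        have := mul_le_mul_of_nonneg_left hB'card hγ.le
        linarith [hQγk, this]
      exact hnd.false (build_spot H γ (γ * k) (2*Q*γ*k) hγ A' B'
        (Finset.disjoint_sdiff.mono hA' hB') hedge hm1 hd1 h1 h2)
    · -- Subcase 2b : many edges inside T ; use max-cut
      push_neg at hc2
      have hTT : (T.card : ℝ) * (α * k) / 2 < (eAB H T T : ℝ) := by
        have hcast : (eAB H T Uf : ℝ) = (eAB H T (Uf \ T) : ℝ) + (eAB H T T : ℝ) := by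
          exact_mod_cast congrArg (Nat.cast : ℕ → ℝ) hUsplit
        linarith
      obtain ⟨T₁, hT₁, hcut⟩ := maxcut H T
      have hcutR : (eAB H T T : ℝ) ≤ 4 * (eAB H T₁ (T \ T₁) : ℝ) := by
        exact_mod_cast hcut
      have hcards : T₁.card + (T \ T₁).card = T.card := by
        have := Finset.card_sdiff_add_card_eq_card hT₁
        omega
      have he : (9/8*(Q*γ*k)) * ((T₁.card : ℝ) + ((T \ T₁).card : ℝ))
          < (eAB H T₁ (T \ T₁) : ℝ) := by
        have hcR : ((T₁.card : ℝ)) + ((T \ T₁).card : ℝ) = (T.card : ℝ) := by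
          exact_mod_cast congrArg (Nat.cast : ℕ → ℝ) hcards
        rw [hcR]
        have h3 := mul_le_mul_of_nonneg_left hTub ht0'
        have hX : (0:ℝ) ≤ Q^2*γ*k*k := by positivity
        linarith [h3, hX, hTT, hkey, hcutR]
      obtain ⟨A', B', hA', hB', hedge, h1, h2⟩ := exists_good H (9/8*(Q*γ*k)) ht0'
        (T₁.card + (T \ T₁).card) T₁ (T \ T₁) le_rfl he
      have hB'card : ((B'.card : ℝ)) ≤ Q * k := by
        refine le_trans ?_ hTub
        exact_mod_cast Finset.card_le_card (hB'.trans (Finset.sdiff_subset))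
      have hm1 : γ * (k:ℝ) < 9/8*(Q*γ*k) := by linarith [hγk, hQ1γk]
      have hd1 : γ * ((B'.card:ℝ)) ≤ 9/8*(Q*γ*k) := by
        have := mul_le_mul_of_nonneg_left hB'card hγ.le
        linarith [hQγk, this]
      exact hnd.false (build_spot H γ (γ * k) (9/8*(Q*γ*k)) hγ A' B'
        (Finset.disjoint_sdiff.mono hA' hB') hedge hm1 hd1 h1 h2)
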